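/- Let N ≥ 2, π a permutation of {1,…,N}, and let h : [0,1) → [0,1) be a Lebesgue-measure-preserving bijection with measure-preserving inverse. Define H : [0,1) → [0,1) by H(x) = (π(i) − 1)/N + h(N·x − (i−1))/N for x ∈ [(i−1)/N, i/N). Then H is a measure-preserving bijection and λ₂(Ω√2^H) = λ₂(Ω√2^{h_π}) + (1/N)·λ₂(Ω√2^h), where for any measure-preserving bijection g, Ω√2^g = {(x,y) ∈ (0,1)² : g(x) ≤ y, g⁻¹(y) ≤ x}, and h_π is the straight shuffle h_π(x) = x − (i−1)/N + (π(i)−1)/N on [(i−1)/N, i/N). -/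

import Mathlib

open MeasureTheory Set
open scoped ENNReal

attribute [local instance] MeasureTheory.Measure.Subtype.measureSpace

/-- For a measure-preserving bijection `f` of `[0,1)` with inverse `finv`, the set
`Ω√2^f = {(x,y) ∈ (0,1)² : f x ≤ y, f⁻¹ y ≤ x}`. -/
def OmegaSqrtTwo (f finv : Ico (0:ℝ) 1 → Ico (0:ℝ) 1) :
    Set (Ico (0:ℝ) 1 × Ico (0:ℝ) 1) :=
  {p | (0 < (p.1 : ℝ) ∧ (p.1 : ℝ) < 1 ∧ 0 < (p.2 : ℝ) ∧ (p.2 : ℝ) < 1) ∧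
    f p.1 ≤ p.2 ∧ finv p.2 ≤ p.1}

def OmegaSqrtTwo' (f finv : Ico (0:ℝ) 1 → Ico (0:ℝ) 1) :
    Set (Ico (0:ℝ) 1 × Ico (0:ℝ) 1) :=
  {p | (0 < (p.1 : ℝ) ∧ (p.1 : ℝ) < 1 ∧ 0 < (p.2 : ℝ) ∧ (p.2 : ℝ) < 1) ∧
    f p.1 ≤ p.2 ∧ finv p.2 ≤ p.1}

namespace Stmt15

variable {N : ℕ}

abbrev UI := ↥(Ico (0:ℝ) 1)

lemma Npos (hN : 0 < N) : (0:ℝ) < N := by exact_mod_cast hN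

noncomputable def enc (hN : 0 < N) (p : Fin N × UI) : UI :=
  ⟨(((p.1 : ℕ) : ℝ) + (p.2 : ℝ)) / N, by
    have hN0 : (0:ℝ) < N := Npos hN
    constructor
    · exact div_nonneg (add_nonneg (Nat.cast_nonneg _) p.2.2.1) hN0.le
    · rw [div_lt_one hN0]
      have h1 : (p.2 : ℝ) < 1 := p.2.2.2
      have h2 : ((p.1 : ℕ) : ℝ) + 1 ≤ N := by exact_mod_cast p.1.is_lt
      linarith⟩

lemma enc_coe (hN : 0 < N) (p : Fin N × UI) :
    (enc hN p : ℝ) = (((p.1 : ℕ) : ℝ) + (p.2 : ℝ)) / N := rfl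

noncomputable def dec (hN : 0 < N) (x : UI) : Fin N × UI :=
  (⟨⌊(N : ℝ) * (x : ℝ)⌋₊, by
      have hN0 : (0:ℝ) < N := Npos hN
      have h0 : 0 ≤ (N:ℝ) * (x:ℝ) := mul_nonneg hN0.le x.2.1
      have : (N:ℝ) * (x:ℝ) < N := by
        nlinarith [x.2.2]
      have := (Nat.floor_lt h0).2 (by exact_mod_cast this)
      exact_mod_cast this⟩,
   ⟨(N : ℝ) * (x : ℝ) - ⌊(N : ℝ) * (x : ℝ)⌋₊, by
      have hN0 : (0:ℝ) < N := Npos hN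
      have h0 : 0 ≤ (N:ℝ) * (x:ℝ) := mul_nonneg hN0.le x.2.1
      constructor
      · have := Nat.floor_le h0
        linarith
      · have := Nat.lt_floor_add_one ((N:ℝ) * (x:ℝ))
        linarith⟩)

lemma enc_dec (hN : 0 < N) (x : UI) : enc hN (dec hN x) = x := by
  have hN0 : (0:ℝ) < N := Npos hN
  apply Subtype.ext
  show (((⌊(N : ℝ) * (x : ℝ)⌋₊ : ℕ) : ℝ) + ((N : ℝ) * (x : ℝ) - ⌊(N : ℝ) * (x : ℝ)⌋₊)) / N = (x:ℝ)
  field_simp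
  ring

lemma dec_enc (hN : 0 < N) (p : Fin N × UI) : dec hN (enc hN p) = p := by
  have hN0 : (0:ℝ) < N := Npos hN
  obtain ⟨i, t⟩ := p
  have key : (N : ℝ) * ((enc hN (i, t)) : ℝ) = ((i : ℕ) : ℝ) + (t : ℝ) := by
    rw [enc_coe]; field_simp
  have hfl : ⌊(N : ℝ) * ((enc hN (i, t)) : ℝ)⌋₊ = (i : ℕ) := by
    rw [key]
    rw [Nat.floor_eq_iff (by have := t.2.1; positivity)]
    constructor
    · linarith [t.2.1]
    · push_cast; linarith [t.2.2]
  ext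
  · show (⟨⌊(N : ℝ) * ((enc hN (i,t)) : ℝ)⌋₊, _⟩ : Fin N).val = i.val
    simpa using hfl
  · show (N : ℝ) * ((enc hN (i, t)) : ℝ) - ⌊(N : ℝ) * ((enc hN (i, t)) : ℝ)⌋₊ = (t : ℝ)
    rw [hfl, key]; ring

lemma measurable_enc (hN : 0 < N) : Measurable (enc hN) := by
  apply Measurable.subtype_mk
  apply Measurable.div_const
  exact ((measurable_of_countable (fun i : Fin N => ((i : ℕ) : ℝ))).comp measurable_fst).add
    (measurable_subtype_coe.comp measurable_snd)

lemma measurable_dec (hN : 0 < N) : Measurable (dec hN) := by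
  have hfl : Measurable (fun x : UI => ⌊(N : ℝ) * (x : ℝ)⌋₊) :=
    Nat.measurable_floor.comp ((measurable_const.mul measurable_subtype_coe))
  have h2 : Measurable (fun x : UI => ((dec hN x).1, (dec hN x).2)) := by
    apply Measurable.prodMk
    · apply measurable_to_countable'
      intro i
      have he : ((fun x : UI => (dec hN x).1) ⁻¹' {i})
          = (fun x : UI => ⌊(N : ℝ) * (x : ℝ)⌋₊) ⁻¹' {(i : ℕ)} := by
        ext x
        simp [dec, Fin.ext_iff]
      rw [he]
      exact hfl (measurableSet_singleton _)
    · apply Measurable.subtype_mk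
      exact (measurable_const.mul measurable_subtype_coe).sub
        ((measurable_of_countable (fun n : ℕ => (n : ℝ))).comp hfl)
  exact h2


noncomputable def encE (hN : 0 < N) : (Fin N × UI) ≃ᵐ UI where
  toFun := enc hN
  invFun := dec hN
  left_inv := dec_enc hN
  right_inv := enc_dec hN
  measurable_toFun := measurable_enc hN
  measurable_invFun := measurable_dec hN

noncomputable def nuN (N : ℕ) : Measure (Fin N) := ((N : ℝ≥0∞))⁻¹ • Measure.count

noncomputable def muN (N : ℕ) : Measure (Fin N × UI) := (nuN N).prod volume

lemma smul_sum' {ι α : Type*} [MeasurableSpace α] (c : ℝ≥0∞) (m : ι → Measure α) :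
    c • Measure.sum m = Measure.sum (fun i => c • m i) := by
  ext s hs
  simp [Measure.sum_apply _ hs, ENNReal.tsum_mul_left]

lemma smul_prod {α β : Type*} [MeasurableSpace α] [MeasurableSpace β]
    (c : ℝ≥0∞) (m : Measure α) (ν : Measure β) [SFinite ν] :
    (c • m).prod ν = c • m.prod ν := by
  ext s hs
  simp [Measure.prod_apply hs, lintegral_smul_measure]

lemma hembUI : MeasurableEmbedding (Subtype.val : UI → ℝ) :=
  MeasurableEmbedding.subtype_coe measurableSet_Ico

lemma vol_UI_apply (s : Set UI) : (volume : Measure UI) s = volume (Subtype.val '' s) :=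
  hembUI.comap_apply volume s

instance : IsProbabilityMeasure (volume : Measure UI) := by
  constructor
  rw [vol_UI_apply, image_univ, Subtype.range_coe]
  simp

instance : NullSingletonClass (volume : Measure UI) := by
  constructor
  intro x
  rw [vol_UI_apply]
  simp

lemma map_val_volume : Measure.map (Subtype.val : UI → ℝ) volume
    = volume.restrict (Ico (0:ℝ) 1) := by
  have h := (MeasurableEmbedding.subtype_coe (measurableSet_Ico : MeasurableSet (Ico (0:ℝ) 1))).map_comap volume
  rw [show (volume : Measure UI) = Measure.comap Subtype.val volume from rfl]
  rw [h, Subtype.range_coe]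

lemma iUnion_blocks (hN : 0 < N) :
    (⋃ i : Fin N, Ico (((i:ℕ):ℝ)/N) ((((i:ℕ):ℝ)+1)/N)) = Ico (0:ℝ) 1 := by
  have hN0 : (0:ℝ) < N := Npos hN
  ext x
  simp only [mem_iUnion, mem_Ico]
  constructor
  · rintro ⟨i, h1, h2⟩
    have hi : ((i:ℕ):ℝ) + 1 ≤ N := by exact_mod_cast i.is_lt
    constructor
    · exact le_trans (by positivity) h1
    · calc x < (((i:ℕ):ℝ)+1)/N := h2
        _ ≤ 1 := by rw [div_le_one hN0]; linarith
  · rintro ⟨h1, h2⟩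
    have h0 : 0 ≤ (N:ℝ) * x := by positivity
    have hlt : (N:ℝ) * x < N := by nlinarith
    refine ⟨⟨⌊(N:ℝ)*x⌋₊, by exact_mod_cast (Nat.floor_lt h0).2 (by exact_mod_cast hlt)⟩, ?_, ?_⟩
    · rw [div_le_iff₀ hN0]
      calc ((⌊(N:ℝ)*x⌋₊ : ℝ)) ≤ (N:ℝ)*x := Nat.floor_le h0
        _ = x * N := by ring
    · rw [lt_div_iff₀ hN0]
      calc x * N = (N:ℝ) * x := by ring
        _ < ⌊(N:ℝ)*x⌋₊ + 1 := Nat.lt_floor_add_one _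

lemma map_enc (hN : 0 < N) : Measure.map (enc hN) (muN N) = volume := by
  have hN0 : (0:ℝ) < N := Npos hN
  have hNe : (N:ℝ≥0∞) ≠ 0 := by exact_mod_cast hN.ne'
  have hNtop : (N:ℝ≥0∞) ≠ ⊤ := ENNReal.natCast_ne_top N
  have hemb := MeasurableEmbedding.subtype_coe (measurableSet_Ico : MeasurableSet (Ico (0:ℝ) 1))
  have hinj : Function.Injective (fun μ' : Measure UI => Measure.map Subtype.val μ') := by
    intro a b hab
    have := congrArg (Measure.comap (Subtype.val : UI → ℝ)) hab
    simpa [hemb.comap_map] using this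
  apply hinj
  simp only
  rw [map_val_volume]
  rw [Measure.map_map hemb.measurable (measurable_enc hN)]
  -- μ = N⁻¹ • sum of map (Prod.mk i) volume
  have hmu : muN N = Measure.sum (fun i : Fin N =>
      ((N : ℝ≥0∞))⁻¹ • Measure.map (Prod.mk i) (volume : Measure UI)) := by
    rw [muN, nuN, show (Measure.count : Measure (Fin N)) = Measure.sum Measure.dirac from rfl,
      smul_prod, Measure.prod_sum_left]
    rw [smul_sum']
    congr 1
    ext i : 1
    rw [Measure.dirac_prod]
  rw [hmu, Measure.map_sum]
  · have hterm : ∀ i : Fin N,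
        Measure.map (Subtype.val ∘ enc hN) (((N : ℝ≥0∞))⁻¹ • Measure.map (Prod.mk i) (volume : Measure UI))
        = volume.restrict (Ico (((i:ℕ):ℝ)/N) ((((i:ℕ):ℝ)+1)/N)) := by
      intro i
      rw [Measure.map_smul,
        Measure.map_map (hemb.measurable.comp (measurable_enc hN)) (measurable_prodMk_left)]
      have hfun : ((Subtype.val ∘ enc hN) ∘ Prod.mk i)
          = (fun u : ℝ => (((i:ℕ):ℝ) + u)/N) ∘ (Subtype.val : UI → ℝ) := by
        funext t; rfl
      rw [hfun, ← Measure.map_map (measurable_const_add _ |>.div_const _) hemb.measurable, map_val_volume]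
      -- now : map affine (volume.restrict (Ico 0 1))
      have haff : (fun u : ℝ => (((i:ℕ):ℝ) + u)/N) = (fun v : ℝ => (N:ℝ)⁻¹ * v) ∘ (fun u : ℝ => u + ((i:ℕ):ℝ)) := by
        funext u; simp [Function.comp]; ring
      have hmapaff : Measure.map (fun u : ℝ => (((i:ℕ):ℝ) + u)/N) volume = (N : ℝ≥0∞) • volume := by
        rw [haff, ← Measure.map_map (measurable_const_mul _) (measurable_add_const _),
          map_add_right_eq_self volume _, Real.map_volume_mul_left (by positivity : (N:ℝ)⁻¹ ≠ 0)]
        congr 1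
        rw [inv_inv, abs_of_pos hN0, ENNReal.ofReal_natCast]
      have hpre : (fun u : ℝ => (((i:ℕ):ℝ) + u)/N) ⁻¹' (Ico (((i:ℕ):ℝ)/N) ((((i:ℕ):ℝ)+1)/N))
          = Ico (0:ℝ) 1 := by
        ext u
        simp only [mem_preimage, mem_Ico]
        rw [div_le_div_iff_of_pos_right hN0, div_lt_div_iff_of_pos_right hN0]
        constructor <;> intro hu <;> exact ⟨by linarith [hu.1], by linarith [hu.2]⟩
      have hres : Measure.map (fun u : ℝ => (((i:ℕ):ℝ) + u)/N) (volume.restrict (Ico (0:ℝ) 1))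
          = (N : ℝ≥0∞) • volume.restrict (Ico (((i:ℕ):ℝ)/N) ((((i:ℕ):ℝ)+1)/N)) := by
        conv_lhs => rw [← hpre]
        rw [← Measure.restrict_map (measurable_const_add _ |>.div_const _) measurableSet_Ico,
          hmapaff, Measure.restrict_smul]
      rw [hres, smul_smul, ENNReal.inv_mul_cancel hNe hNtop, one_smul]
    rw [show (fun i : Fin N => Measure.map (Subtype.val ∘ enc hN)
        (((N : ℝ≥0∞))⁻¹ • Measure.map (Prod.mk i) (volume : Measure UI)))
        = (fun i : Fin N => volume.restrict (Ico (((i:ℕ):ℝ)/N) ((((i:ℕ):ℝ)+1)/N))) from funext hterm]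
    rw [← Measure.restrict_iUnion ?_ (fun i => measurableSet_Ico), iUnion_blocks hN]
    intro a b hab
    simp only [Function.onFun]
    rw [Set.Ico_disjoint_Ico]
    rcases lt_or_gt_of_ne (fun hh : (a:ℕ) = (b:ℕ) => hab (Fin.ext hh)) with hlt | hlt
    · refine le_trans (min_le_left _ _) (le_trans ?_ (le_max_right _ _))
      rw [div_le_div_iff_of_pos_right hN0]
      exact_mod_cast hlt
    · refine le_trans (min_le_right _ _) (le_trans ?_ (le_max_left _ _))
      rw [div_le_div_iff_of_pos_right hN0]
      exact_mod_cast hlt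
  · exact (hemb.measurable.comp (measurable_enc hN)).aemeasurable


lemma nuN_univ (hN : 0 < N) : nuN N univ = 1 := by
  rw [nuN]
  simp only [Measure.smul_apply, Measure.count_univ, ENat.card_eq_coe_fintype_card, Fintype.card_fin, ENat.toENNReal_coe, smul_eq_mul]
  rw [ENNReal.inv_mul_cancel (by exact_mod_cast hN.ne') (ENNReal.natCast_ne_top N)]

lemma nuN_singleton (i : Fin N) : nuN N {i} = (N : ℝ≥0∞)⁻¹ := by
  rw [nuN]
  simp [Measure.count_singleton]

instance (N : ℕ) : SFinite (nuN N) := by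
  rw [nuN, show (Measure.count : Measure (Fin N)) = Measure.sum Measure.dirac from rfl, smul_sum']
  infer_instance

lemma map_perm_nuN (π : Equiv.Perm (Fin N)) : Measure.map π (nuN N) = nuN N := by
  ext s hs
  rw [Measure.map_apply (measurable_of_countable _) hs, nuN]
  simp only [Measure.smul_apply, smul_eq_mul]
  congr 1
  rw [Measure.count_apply hs, Measure.count_apply (MeasurableSet.of_discrete)]
  rw [← Equiv.image_symm_eq_preimage, π.symm.injective.encard_image]

lemma mp_enc (hN : 0 < N) : MeasurePreserving (enc hN) (muN N) volume :=
  ⟨measurable_enc hN, map_enc hN⟩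

lemma mp_F (hN : 0 < N) (π : Equiv.Perm (Fin N)) {h : UI → UI}
    (hmp : MeasurePreserving h volume volume) :
    MeasurePreserving (Prod.map π h) (muN N) (muN N) :=
  MeasurePreserving.prod ⟨measurable_of_countable _, map_perm_nuN π⟩ hmp

lemma enc_le_enc (hN : 0 < N) (a b : Fin N) (u v : UI) :
    enc hN (a, u) ≤ enc hN (b, v) ↔ (a < b ∨ (a = b ∧ u ≤ v)) := by
  have hN0 : (0:ℝ) < N := Npos hN
  rw [← Subtype.coe_le_coe, enc_coe, enc_coe]
  rw [div_le_div_iff_of_pos_right hN0]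
  constructor
  · intro hle
    rcases lt_trichotomy a b with hab | hab | hab
    · exact Or.inl hab
    · refine Or.inr ⟨hab, ?_⟩
      rw [← Subtype.coe_le_coe]
      have : ((a:ℕ):ℝ) = ((b:ℕ):ℝ) := by exact_mod_cast congrArg (fun x : Fin N => ((x:ℕ):ℝ)) hab
      linarith
    · exfalso
      have hba : ((b:ℕ):ℝ) + 1 ≤ ((a:ℕ):ℝ) := by exact_mod_cast hab
      have := u.2.1
      have := v.2.2
      linarith
  · rintro (hab | ⟨hab, huv⟩)
    · have : ((a:ℕ):ℝ) + 1 ≤ ((b:ℕ):ℝ) := by exact_mod_cast hab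
      have := u.2.2
      have := v.2.1
      linarith
    · subst hab
      have : (u:ℝ) ≤ (v:ℝ) := huv
      linarith

lemma enc_pos (hN : 0 < N) (a : Fin N) (u : UI) :
    (0:ℝ) < (enc hN (a, u) : ℝ) ↔ ¬((a:ℕ) = 0 ∧ (u:ℝ) = 0) := by
  have hN0 : (0:ℝ) < N := Npos hN
  rw [enc_coe]
  rw [div_pos_iff_of_pos_right hN0]
  constructor
  · rintro hp ⟨h1, h2⟩
    rw [h1, h2] at hp
    simp at hp
  · intro hne
    rcases (Nat.eq_zero_or_pos (a:ℕ)) with h1 | h1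
    · have h2 : (u:ℝ) ≠ 0 := fun hc => hne ⟨h1, hc⟩
      have := u.2.1
      have : (0:ℝ) < u := lt_of_le_of_ne this (Ne.symm h2)
      rw [h1]
      simpa using this
    · have : (1:ℝ) ≤ ((a:ℕ):ℝ) := by exact_mod_cast h1
      linarith [u.2.1]


instance (N : ℕ) : SFinite (muN N) := by unfold muN; infer_instance

noncomputable def E2 (hN : 0 < N) : ((Fin N × UI) × (Fin N × UI)) ≃ᵐ (UI × UI) :=
  (encE hN).prodCongr (encE hN)

noncomputable def m2 (N : ℕ) : Measure ((Fin N × UI) × (Fin N × UI)) := (muN N).prod (muN N)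

lemma map_E2 (hN : 0 < N) : Measure.map (E2 hN) (m2 N) = volume := by
  rw [Measure.volume_eq_prod, m2]
  have : ⇑(E2 hN) = Prod.map (enc hN) (enc hN) := rfl
  rw [this, ← Measure.map_prod_map _ _ (measurable_enc hN) (measurable_enc hN),
    map_enc hN]

lemma vol2_eq (hN : 0 < N) (S : Set (UI × UI)) :
    volume S = m2 N ((E2 hN) ⁻¹' S) := by
  rw [← map_E2 hN, MeasurableEquiv.map_apply]

def core (h g : UI → UI) : Set (UI × UI) := {q | h q.1 ≤ q.2 ∧ g q.2 ≤ q.1}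

def Off (π : Equiv.Perm (Fin N)) : Set ((Fin N × UI) × (Fin N × UI)) :=
  {p | π p.1.1 < p.2.1 ∧ π.symm p.2.1 < p.1.1}

def DiagH (π : Equiv.Perm (Fin N)) (h g : UI → UI) : Set ((Fin N × UI) × (Fin N × UI)) :=
  {p | p.2.1 = π p.1.1 ∧ (p.1.2, p.2.2) ∈ core h g}

lemma measurable_le_set {h : UI → UI} (hh : Measurable h) :
    MeasurableSet {q : UI × UI | h q.1 ≤ q.2} := by
  have : {q : UI × UI | h q.1 ≤ q.2}
      = (fun q : UI × UI => ((h q.1 : ℝ) - (q.2 : ℝ))) ⁻¹' Iic 0 := by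
    ext q
    simp [Subtype.coe_le_coe, sub_nonpos, ← Subtype.coe_le_coe]
  rw [this]
  exact ((measurable_subtype_coe.comp (hh.comp measurable_fst)).sub
    (measurable_subtype_coe.comp measurable_snd)) measurableSet_Iic

lemma measurable_core {h g : UI → UI} (hh : Measurable h) (hg : Measurable g) :
    MeasurableSet (core h g) := by
  have h1 := measurable_le_set hh
  have h2 : MeasurableSet {q : UI × UI | g q.2 ≤ q.1} := by
    have := measurable_le_set hg
    have hsw : {q : UI × UI | g q.2 ≤ q.1} = Prod.swap ⁻¹' {q : UI × UI | g q.1 ≤ q.2} := by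
      ext q; simp
    rw [hsw]
    exact measurable_swap this
  exact h1.inter h2

lemma measurable_DiagH (π : Equiv.Perm (Fin N)) {h g : UI → UI}
    (hh : Measurable h) (hg : Measurable g) : MeasurableSet (DiagH π h g) := by
  have h1 : MeasurableSet {p : (Fin N × UI) × (Fin N × UI) | p.2.1 = π p.1.1} := by
    have : {p : (Fin N × UI) × (Fin N × UI) | p.2.1 = π p.1.1}
        = (fun p : (Fin N × UI) × (Fin N × UI) => (p.1.1, p.2.1)) ⁻¹'
          {q : Fin N × Fin N | q.2 = π q.1} := rfl
    rw [this]
    exact ((measurable_fst.fst.prodMk measurable_snd.fst))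
      ((Set.to_countable _).measurableSet)
  have h2 : MeasurableSet {p : (Fin N × UI) × (Fin N × UI) | (p.1.2, p.2.2) ∈ core h g} := by
    have : {p : (Fin N × UI) × (Fin N × UI) | (p.1.2, p.2.2) ∈ core h g}
        = (fun p : (Fin N × UI) × (Fin N × UI) => (p.1.2, p.2.2)) ⁻¹' core h g := rfl
    rw [this]
    exact (measurable_fst.snd.prodMk measurable_snd.snd) (measurable_core hh hg)
  exact h1.inter h2

lemma measurable_Off (π : Equiv.Perm (Fin N)) : MeasurableSet (Off (N := N) π) := by
  have : Off (N := N) π = (fun p : (Fin N × UI) × (Fin N × UI) => (p.1.1, p.2.1)) ⁻¹'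
      {q : Fin N × Fin N | π q.1 < q.2 ∧ π.symm q.2 < q.1} := rfl
  rw [this]
  exact ((measurable_fst.fst.prodMk measurable_snd.fst))
    ((Set.to_countable _).measurableSet)

lemma m2_DiagH (hN : 0 < N) (π : Equiv.Perm (Fin N)) {h g : UI → UI}
    (hh : Measurable h) (hg : Measurable g) :
    m2 N (DiagH π h g) = (N : ℝ≥0∞)⁻¹ * volume (core h g) := by
  rw [m2, Measure.prod_apply (measurable_DiagH π hh hg)]
  have hfib : ∀ q : Fin N × UI, Prod.mk q ⁻¹' (DiagH π h g)
      = {π q.1} ×ˢ {s : UI | h q.2 ≤ s ∧ g s ≤ q.2} := by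
    intro q
    ext q'
    simp only [DiagH, core, mem_preimage, mem_setOf_eq, mem_prod, mem_singleton_iff]
    try tauto
  have hint : ∀ q : Fin N × UI, muN N (Prod.mk q ⁻¹' (DiagH π h g))
      = (N : ℝ≥0∞)⁻¹ * volume (Prod.mk q.2 ⁻¹' (core h g)) := by
    intro q
    rw [hfib q, muN, Measure.prod_prod, nuN_singleton]
    rfl
  simp_rw [hint]
  have hmsnd : Measurable (fun t : UI => volume (Prod.mk t ⁻¹' (core h g))) :=
    measurable_measure_prodMk_left (measurable_core hh hg)
  have hm2 : Measurable (fun x : Fin N × UI => volume (Prod.mk x.2 ⁻¹' (core h g))) :=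
    hmsnd.comp measurable_snd
  rw [lintegral_const_mul _ hm2]
  congr 1
  have h1 : ∫⁻ x : Fin N × UI, volume (Prod.mk x.2 ⁻¹' (core h g)) ∂(muN N)
      = ∫⁻ t : UI, volume (Prod.mk t ⁻¹' (core h g)) ∂(Measure.map Prod.snd (muN N)) :=
    (lintegral_map hmsnd measurable_snd).symm
  have h2 : Measure.map Prod.snd (muN N) = (volume : Measure UI) := by
    rw [muN, Measure.map_snd_prod, nuN_univ hN, one_smul]
  rw [h1, h2, ← Measure.prod_apply (measurable_core hh hg), ← Measure.volume_eq_prod]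


lemma muN_univ (hN : 0 < N) : muN N univ = 1 := by
  rw [muN, ← univ_prod_univ, Measure.prod_prod, nuN_univ hN, measure_univ, one_mul]

lemma zeroUI_mem : (0:ℝ) ∈ Ico (0:ℝ) 1 := by norm_num

lemma m2_fst_snd_eq (z : UI) : m2 N {p : (Fin N × UI) × (Fin N × UI) | p.1.2 = z} = 0 := by
  have he : {p : (Fin N × UI) × (Fin N × UI) | p.1.2 = z}
      = ((univ : Set (Fin N)) ×ˢ ({z} : Set UI)) ×ˢ (univ : Set (Fin N × UI)) := by
    ext p
    simp only [mem_setOf_eq, mem_prod, mem_univ, mem_singleton_iff, true_and, and_true]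
  rw [he, m2, Measure.prod_prod, muN, Measure.prod_prod]
  simp

lemma m2_snd_snd_eq (z : UI) : m2 N {p : (Fin N × UI) × (Fin N × UI) | p.2.2 = z} = 0 := by
  have he : {p : (Fin N × UI) × (Fin N × UI) | p.2.2 = z}
      = (univ : Set (Fin N × UI)) ×ˢ ((univ : Set (Fin N)) ×ˢ ({z} : Set UI)) := by
    ext p
    simp only [mem_setOf_eq, mem_prod, mem_univ, mem_singleton_iff, true_and, and_true]
  rw [he, m2, Measure.prod_prod, muN, Measure.prod_prod]
  simp

lemma measurable_diagUI : MeasurableSet {q : UI × UI | q.1 = q.2} := by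
  have : {q : UI × UI | q.1 = q.2}
      = (fun q : UI × UI => ((q.1 : ℝ) - (q.2 : ℝ))) ⁻¹' {0} := by
    ext q
    simp [Subtype.ext_iff, sub_eq_zero]
  rw [this]
  exact ((measurable_subtype_coe.comp measurable_fst).sub
    (measurable_subtype_coe.comp measurable_snd)) (measurableSet_singleton _)

lemma vol_diagUI : volume {q : UI × UI | q.1 = q.2} = 0 := by
  rw [Measure.volume_eq_prod, Measure.prod_apply measurable_diagUI]
  have : ∀ t : UI, (Prod.mk t ⁻¹' {q : UI × UI | q.1 = q.2}) = {t} := by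
    intro t; ext s; simp [eq_comm]
  simp_rw [this]
  simp

lemma vol2_fst_eq (z : UI) : volume {q : UI × UI | q.1 = z} = 0 := by
  have he : {q : UI × UI | q.1 = z} = ({z} : Set UI) ×ˢ (univ : Set UI) := by
    ext q
    simp only [mem_setOf_eq, mem_prod, mem_univ, mem_singleton_iff, and_true]
  rw [Measure.volume_eq_prod, he, Measure.prod_prod]
  simp

lemma vol2_snd_eq (z : UI) : volume {q : UI × UI | q.2 = z} = 0 := by
  have he : {q : UI × UI | q.2 = z} = (univ : Set UI) ×ˢ ({z} : Set UI) := by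
    ext q
    simp only [mem_setOf_eq, mem_prod, mem_univ, mem_singleton_iff, true_and]
  rw [Measure.volume_eq_prod, he, Measure.prod_prod]
  simp

lemma omega_eq (hN : 0 < N) (π : Equiv.Perm (Fin N)) (h g H G : UI → UI)
    (hh : Measurable h) (hg : Measurable g)
    (hH : ∀ p : Fin N × UI, H (enc hN p) = enc hN (π p.1, h p.2))
    (hG : ∀ p : Fin N × UI, G (enc hN p) = enc hN (π.symm p.1, g p.2)) :
    volume (OmegaSqrtTwo' H G) = m2 N (Off π) + (N : ℝ≥0∞)⁻¹ * volume (core h g) := by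
  rw [vol2_eq hN]
  set A := (E2 hN) ⁻¹' (OmegaSqrtTwo' H G) with hA
  have hmem : ∀ p : (Fin N × UI) × (Fin N × UI), p ∈ A ↔
      ((0 < ((enc hN p.1 : UI) : ℝ) ∧ ((enc hN p.1 : UI) : ℝ) < 1 ∧
        0 < ((enc hN p.2 : UI) : ℝ) ∧ ((enc hN p.2 : UI) : ℝ) < 1) ∧
       H (enc hN p.1) ≤ enc hN p.2 ∧ G (enc hN p.2) ≤ enc hN p.1) := fun p => Iff.rfl
  have hHle : ∀ p : (Fin N × UI) × (Fin N × UI), (H (enc hN p.1) ≤ enc hN p.2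
      ↔ (π p.1.1 < p.2.1 ∨ (π p.1.1 = p.2.1 ∧ h p.1.2 ≤ p.2.2))) := by
    intro p
    rw [hH p.1, show enc hN p.2 = enc hN (p.2.1, p.2.2) from rfl, enc_le_enc]
  have hGle : ∀ p : (Fin N × UI) × (Fin N × UI), (G (enc hN p.2) ≤ enc hN p.1
      ↔ (π.symm p.2.1 < p.1.1 ∨ (π.symm p.2.1 = p.1.1 ∧ g p.2.2 ≤ p.1.2))) := by
    intro p
    rw [hG p.2, show enc hN p.1 = enc hN (p.1.1, p.1.2) from rfl, enc_le_enc]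
  have hsub1 : A ⊆ Off π ∪ DiagH π h g := by
    intro p hp
    rw [hmem p] at hp
    obtain ⟨_, hle1, hle2⟩ := hp
    rw [hHle p] at hle1
    rw [hGle p] at hle2
    rcases hle1 with hlt1 | ⟨heq1, hts⟩
    · rcases hle2 with hlt2 | ⟨heq2, _⟩
      · exact Or.inl ⟨hlt1, hlt2⟩
      · exfalso
        rw [Equiv.symm_apply_eq] at heq2
        rw [← heq2] at hlt1
        exact lt_irrefl _ hlt1
    · rcases hle2 with hlt2 | ⟨_, hgs⟩
      · exfalso
        have : π.symm p.2.1 = p.1.1 := by rw [← heq1]; simp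
        rw [this] at hlt2
        exact lt_irrefl _ hlt2
      · exact Or.inr ⟨heq1.symm, hts, hgs⟩
  have hsub2 : (Off π ∪ DiagH π h g) \ A ⊆
      {p : (Fin N × UI) × (Fin N × UI) | p.1.2 = (⟨0, zeroUI_mem⟩ : UI)}
      ∪ {p : (Fin N × UI) × (Fin N × UI) | p.2.2 = (⟨0, zeroUI_mem⟩ : UI)} := by
    rintro p ⟨hpU, hpA⟩
    by_contra hbad
    have hb1 : p.1.2 ≠ (⟨0, zeroUI_mem⟩ : UI) := fun hc => hbad (Or.inl hc)
    have hb2 : p.2.2 ≠ (⟨0, zeroUI_mem⟩ : UI) := fun hc => hbad (Or.inr hc)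
    apply hpA
    rw [hmem p]
    refine ⟨⟨?_, (enc hN p.1).2.2, ?_, (enc hN p.2).2.2⟩, ?_, ?_⟩
    · rw [show enc hN p.1 = enc hN (p.1.1, p.1.2) from rfl, enc_pos]
      rintro ⟨_, ht0⟩
      exact hb1 (Subtype.ext ht0)
    · rw [show enc hN p.2 = enc hN (p.2.1, p.2.2) from rfl, enc_pos]
      rintro ⟨_, hs0⟩
      exact hb2 (Subtype.ext hs0)
    · rw [hHle p]
      rcases hpU with hoff | hdiag
      · exact Or.inl hoff.1
      · exact Or.inr ⟨hdiag.1.symm, hdiag.2.1⟩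
    · rw [hGle p]
      rcases hpU with hoff | hdiag
      · exact Or.inl hoff.2
      · refine Or.inr ⟨?_, hdiag.2.2⟩
        rw [hdiag.1]
        simp
  have hae : A =ᵐ[m2 N] ((Off π ∪ DiagH π h g) : Set ((Fin N × UI) × (Fin N × UI))) := by
    rw [MeasureTheory.ae_eq_set]
    constructor
    · have : A \ (Off π ∪ DiagH π h g) = ∅ := diff_eq_empty.mpr hsub1
      rw [this]
      simp
    · refine measure_mono_null hsub2 ?_
      exact measure_union_null (m2_fst_snd_eq _) (m2_snd_snd_eq _)
  rw [measure_congr hae]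
  have hdisj : Disjoint (Off π) (DiagH π h g) := by
    rw [Set.disjoint_left]
    rintro p ⟨hlt, _⟩ ⟨heq, _⟩
    rw [heq] at hlt
    exact lt_irrefl _ hlt
  rw [measure_union hdisj (measurable_DiagH π hh hg), m2_DiagH hN π hh hg]


lemma omega_core_ae (h g : UI → UI) : volume (OmegaSqrtTwo' h g) = volume (core h g) := by
  apply measure_congr
  rw [MeasureTheory.ae_eq_set]
  constructor
  · have : OmegaSqrtTwo' h g \ core h g = ∅ := by
      rw [diff_eq_empty]
      rintro q ⟨_, hle1, hle2⟩
      exact ⟨hle1, hle2⟩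
    rw [this]
    simp
  · refine measure_mono_null (fun q hq => ?_)
      (measure_union_null (vol2_fst_eq (⟨0, zeroUI_mem⟩ : UI)) (vol2_snd_eq (⟨0, zeroUI_mem⟩ : UI)))
    obtain ⟨hqc, hqo⟩ := hq
    by_contra hbad
    have hb1 : q.1 ≠ (⟨0, zeroUI_mem⟩ : UI) := fun hc => hbad (Or.inl hc)
    have hb2 : q.2 ≠ (⟨0, zeroUI_mem⟩ : UI) := fun hc => hbad (Or.inr hc)
    apply hqo
    refine ⟨⟨?_, q.1.2.2, ?_, q.2.2.2⟩, hqc.1, hqc.2⟩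
    · exact lt_of_le_of_ne q.1.2.1 (fun hc => hb1 (Subtype.ext hc.symm))
    · exact lt_of_le_of_ne q.2.2.1 (fun hc => hb2 (Subtype.ext hc.symm))

lemma core_id_null : volume (core (id : UI → UI) id) = 0 := by
  refine le_antisymm (le_trans (measure_mono ?_) (le_of_eq vol_diagUI)) (zero_le)
  rintro q ⟨h1, h2⟩
  exact le_antisymm h1 h2

lemma m2_univ (hN : 0 < N) : m2 N univ = 1 := by
  rw [m2, ← univ_prod_univ, Measure.prod_prod, muN_univ hN, one_mul]

end Stmt15

/-- For `N ≥ 2`, a permutation `π` of `{0,…,N-1}` and a measure-preserving bijection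
`h` of `[0,1)` with measure-preserving inverse `g`, the map
`H(x) = π(i)/N + h(Nx - i)/N` on `[i/N, (i+1)/N)` (corresponding to `V_π(A_h)`) is a
measure-preserving bijection and `λ₂(Ω√2^H) = λ₂(Ω√2^{h_π}) + (1/N)·λ₂(Ω√2^h)`,
where `h_π` is the straight shuffle `h_π x = x - i/N + π(i)/N` on `[i/N, (i+1)/N)`. -/
theorem stmt_15 (N : ℕ) (hN : 2 ≤ N) (π : Equiv.Perm (Fin N))
    (h g : Ico (0:ℝ) 1 → Ico (0:ℝ) 1)
    (hbij : Function.Bijective h)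
    (hmp : MeasurePreserving h volume volume)
    (hgl : Function.LeftInverse g h) (hgr : Function.RightInverse g h)
    (hgmp : MeasurePreserving g volume volume)
    (hπ gπ H G : Ico (0:ℝ) 1 → Ico (0:ℝ) 1)
    (hπspec : ∀ (x : Ico (0:ℝ) 1) (i : Fin N),
      ((i : ℕ) : ℝ) / N ≤ (x : ℝ) → (x : ℝ) < (((i : ℕ) : ℝ) + 1) / N →
        (hπ x : ℝ) = (x : ℝ) - ((i : ℕ) : ℝ) / N + ((π i : ℕ) : ℝ) / N)
    (hgπspec : ∀ (y : Ico (0:ℝ) 1) (j : Fin N),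
      ((j : ℕ) : ℝ) / N ≤ (y : ℝ) → (y : ℝ) < (((j : ℕ) : ℝ) + 1) / N →
        (gπ y : ℝ) = (y : ℝ) - ((j : ℕ) : ℝ) / N + ((π.symm j : ℕ) : ℝ) / N)
    (hHspec : ∀ (i : Fin N) (t : Ico (0:ℝ) 1),
      (H ⟨(((i : ℕ) : ℝ) + (t : ℝ)) / N, by
          have hN0 : (0:ℝ) < N := by
            have : 0 < N := by omega
            exact_mod_cast this
          constructor
          · exact div_nonneg (add_nonneg (Nat.cast_nonneg _) t.2.1) hN0.le
          · rw [div_lt_one hN0]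
            have h1 : (t : ℝ) < 1 := t.2.2
            have h2 : ((i : ℕ) : ℝ) + 1 ≤ N := by exact_mod_cast i.is_lt
            linarith⟩ : ℝ) = (((π i : ℕ) : ℝ) + (h t : ℝ)) / N)
    (hGspec : ∀ (j : Fin N) (t : Ico (0:ℝ) 1),
      (G ⟨(((j : ℕ) : ℝ) + (t : ℝ)) / N, by
          have hN0 : (0:ℝ) < N := by
            have : 0 < N := by omega
            exact_mod_cast this
          constructor
          · exact div_nonneg (add_nonneg (Nat.cast_nonneg _) t.2.1) hN0.le
          · rw [div_lt_one hN0]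
            have h1 : (t : ℝ) < 1 := t.2.2
            have h2 : ((j : ℕ) : ℝ) + 1 ≤ N := by exact_mod_cast j.is_lt
            linarith⟩ : ℝ) = (((π.symm j : ℕ) : ℝ) + (g t : ℝ)) / N) :
    Function.Bijective H ∧
    MeasurePreserving H volume volume ∧
    Function.LeftInverse G H ∧ Function.RightInverse G H ∧
    (volume (OmegaSqrtTwo H G)).toReal =
      (volume (OmegaSqrtTwo hπ gπ)).toReal +
        (1 / (N : ℝ)) * (volume (OmegaSqrtTwo h g)).toReal := by
  have hN0 : 0 < N := by omega
  have hOmega : ∀ f finv : Ico (0:ℝ) 1 → Ico (0:ℝ) 1,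
      OmegaSqrtTwo f finv = OmegaSqrtTwo' f finv := fun _ _ => rfl
  have hH' : ∀ p : Fin N × Stmt15.UI, H (Stmt15.enc hN0 p) = Stmt15.enc hN0 (π p.1, h p.2) :=
    fun p => Subtype.ext (hHspec p.1 p.2)
  have hG' : ∀ p : Fin N × Stmt15.UI, G (Stmt15.enc hN0 p) = Stmt15.enc hN0 (π.symm p.1, g p.2) :=
    fun p => Subtype.ext (hGspec p.1 p.2)
  have hGH : Function.LeftInverse G H := by
    intro x
    have hx := Stmt15.enc_dec hN0 x
    calc G (H x) = G (H (Stmt15.enc hN0 (Stmt15.dec hN0 x))) := by rw [hx]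
      _ = G (Stmt15.enc hN0 (π (Stmt15.dec hN0 x).1, h (Stmt15.dec hN0 x).2)) := by
          rw [hH' (Stmt15.dec hN0 x)]
      _ = Stmt15.enc hN0 (π.symm (π (Stmt15.dec hN0 x).1), g (h (Stmt15.dec hN0 x).2)) :=
          hG' _
      _ = Stmt15.enc hN0 ((Stmt15.dec hN0 x).1, (Stmt15.dec hN0 x).2) := by
          rw [Equiv.symm_apply_apply, hgl _]
      _ = x := hx
  have hHG : Function.RightInverse G H := by
    intro x
    have hx := Stmt15.enc_dec hN0 x
    calc H (G x) = H (G (Stmt15.enc hN0 (Stmt15.dec hN0 x))) := by rw [hx]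
      _ = H (Stmt15.enc hN0 (π.symm (Stmt15.dec hN0 x).1, g (Stmt15.dec hN0 x).2)) := by
          rw [hG' (Stmt15.dec hN0 x)]
      _ = Stmt15.enc hN0 (π (π.symm (Stmt15.dec hN0 x).1), h (g (Stmt15.dec hN0 x).2)) :=
          hH' _
      _ = Stmt15.enc hN0 ((Stmt15.dec hN0 x).1, (Stmt15.dec hN0 x).2) := by
          rw [Equiv.apply_symm_apply, hgr _]
      _ = x := hx
  have hHfun : H = (Stmt15.enc hN0) ∘ (Prod.map π h) ∘ (Stmt15.dec hN0) := by
    funext x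
    conv_lhs => rw [← Stmt15.enc_dec hN0 x]
    exact hH' (Stmt15.dec hN0 x)
  have hmpH : MeasurePreserving H volume volume := by
    rw [hHfun]
    exact (Stmt15.mp_enc hN0).comp ((Stmt15.mp_F hN0 π hmp).comp
      (MeasurePreserving.symm (Stmt15.encE hN0) (Stmt15.mp_enc hN0)))
  have hπ' : ∀ p : Fin N × Stmt15.UI, hπ (Stmt15.enc hN0 p) = Stmt15.enc hN0 (π p.1, p.2) := by
    intro p
    have hNr : (0:ℝ) < N := Stmt15.Npos hN0
    have hlo : ((p.1 : ℕ) : ℝ) / N ≤ ((Stmt15.enc hN0 p : Stmt15.UI) : ℝ) := by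
      rw [Stmt15.enc_coe, div_le_div_iff_of_pos_right hNr]
      linarith [p.2.2.1]
    have hhi : ((Stmt15.enc hN0 p : Stmt15.UI) : ℝ) < (((p.1 : ℕ) : ℝ) + 1) / N := by
      rw [Stmt15.enc_coe, div_lt_div_iff_of_pos_right hNr]
      linarith [p.2.2.2]
    apply Subtype.ext
    rw [hπspec (Stmt15.enc hN0 p) p.1 hlo hhi, Stmt15.enc_coe, Stmt15.enc_coe]
    field_simp
    ring
  have hgπ' : ∀ p : Fin N × Stmt15.UI, gπ (Stmt15.enc hN0 p) = Stmt15.enc hN0 (π.symm p.1, p.2) := by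
    intro p
    have hNr : (0:ℝ) < N := Stmt15.Npos hN0
    have hlo : ((p.1 : ℕ) : ℝ) / N ≤ ((Stmt15.enc hN0 p : Stmt15.UI) : ℝ) := by
      rw [Stmt15.enc_coe, div_le_div_iff_of_pos_right hNr]
      linarith [p.2.2.1]
    have hhi : ((Stmt15.enc hN0 p : Stmt15.UI) : ℝ) < (((p.1 : ℕ) : ℝ) + 1) / N := by
      rw [Stmt15.enc_coe, div_lt_div_iff_of_pos_right hNr]
      linarith [p.2.2.2]
    apply Subtype.ext
    rw [hgπspec (Stmt15.enc hN0 p) p.1 hlo hhi, Stmt15.enc_coe, Stmt15.enc_coe]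
    field_simp
    ring
  refine ⟨Function.bijective_iff_has_inverse.mpr ⟨G, hGH, hHG⟩, hmpH, hGH, hHG, ?_⟩
  have e1 : volume (OmegaSqrtTwo H G)
      = Stmt15.m2 N (Stmt15.Off π) + (N : ℝ≥0∞)⁻¹ * volume (Stmt15.core h g) := by
    rw [hOmega]
    exact Stmt15.omega_eq hN0 π h g H G hmp.measurable hgmp.measurable hH' hG'
  have e2 : volume (OmegaSqrtTwo hπ gπ) = Stmt15.m2 N (Stmt15.Off π) := by
    rw [hOmega]
    rw [Stmt15.omega_eq hN0 π id id hπ gπ measurable_id measurable_id hπ' hgπ',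
      Stmt15.core_id_null, mul_zero, add_zero]
  have e3 : volume (OmegaSqrtTwo h g) = volume (Stmt15.core h g) := by
    rw [hOmega]
    exact Stmt15.omega_core_ae h g
  have hofffin : Stmt15.m2 N (Stmt15.Off π) ≠ ⊤ := by
    refine ne_top_of_le_ne_top ?_ (measure_mono (subset_univ _))
    rw [Stmt15.m2_univ hN0]
    exact ENNReal.one_ne_top
  have hcorefin : volume (Stmt15.core h g) ≠ ⊤ := by
    refine ne_top_of_le_ne_top ?_ (measure_mono (subset_univ _))
    rw [Measure.volume_eq_prod, ← univ_prod_univ, Measure.prod_prod, measure_univ, one_mul]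
    exact ENNReal.one_ne_top
  rw [e1, e2, e3]
  rw [ENNReal.toReal_add hofffin (ENNReal.mul_ne_top (by simp [hN0.ne']) hcorefin), ENNReal.toReal_mul]
  congr 1
  congr 1
  rw [ENNReal.toReal_inv]
  simp
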